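/- For every q > 1/n, the coordinate function x_i of the n-dimensional Peano curve is nowhere q-Hölder continuous: for every t ∈ [0,1] there do NOT exist constants C, δ > 0 such that |x_i(t) − x_i(t')| ≤ C|t − t'|^q for all t' ∈ [0,1] with |t − t'| < δ. In particular, x_i is nowhere differentiable. -/

import Mathlib

open scoped BigOperators ENNReal

/-- `Φ` : evaluation of a ternary digit sequence (digits at indices `1,2,3,…`). -/
noncomputable def Phi (t : ℕ → ℕ) : ℝ := ∑' k : ℕ, (t (k + 1) : ℝ) / 3 ^ (k + 1)

/-- A sequence of ternary digits (elements of `D = {0,1,2}`). -/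
def IsDigitSeq (t : ℕ → ℕ) : Prop := ∀ k, t k ≤ 2

/-- `S_{i+jn}(𝐭) = ∑_{k=1}^{i+jn} t_k − ∑_{s=0}^{j} t_{i+sn}`. -/
def S (n i j : ℕ) (t : ℕ → ℕ) : ℤ :=
  (∑ k ∈ Finset.Icc 1 (i + j * n), (t k : ℤ)) -
    ∑ s ∈ Finset.range (j + 1), (t (i + s * n) : ℤ)

/-- The operator `ξ(a) = 2 − a`, as a permutation of `ℝ` (so that integer powers
`ξ^m`, `m : ℤ`, make sense). -/
def xiPerm : Equiv.Perm ℝ :=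
  ⟨fun a => 2 - a, fun a => 2 - a, fun a => by dsimp; ring, fun a => by dsimp; ring⟩

/-- `x_i(𝐭) = ∑_{j=0}^∞ ξ^{S_{i+jn}(𝐭)}(t_{i+jn}) / 3^{j+1}`. -/
noncomputable def xcoord (n i : ℕ) (t : ℕ → ℕ) : ℝ :=
  ∑' j : ℕ, ((xiPerm ^ (S n i j t)) ((t (i + j * n) : ℝ))) / 3 ^ (j + 1)

/-- The canonical ternary digit expansion of `t ∈ [0,1]` (all digits `2` for `t = 1`). -/
noncomputable def ternaryDigit (t : ℝ) (k : ℕ) : ℕ :=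
  if t = 1 then 2 else (⌊t * 3 ^ k⌋).toNat % 3

/-- The `i`-th coordinate function of the `n`-dimensional Peano curve, as a function
on `[0,1]` (via the canonical ternary representation; by well-definedness this agrees
with `xcoord` on any ternary representation). -/
noncomputable def peanoCoord (n i : ℕ) (t : ℝ) : ℝ := xcoord n i (ternaryDigit t)

-- geometric facts
lemma summable_geom3 : Summable (fun k : ℕ => (2:ℝ) / 3 ^ (k + 1)) := by
  have h : Summable (fun k : ℕ => (2/3 : ℝ) * (1/3:ℝ) ^ k) :=
    (summable_geometric_of_lt_one (by norm_num) (by norm_num)).mul_left _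
  refine h.congr fun k => ?_
  field_simp
  rw [pow_succ, ← mul_assoc, ← mul_pow]; norm_num

lemma tsum_geom3 : ∑' k : ℕ, (2:ℝ) / 3 ^ (k + 1) = 1 := by
  have h : ∑' k : ℕ, ((1/3:ℝ)) ^ k = (1 - 1/3)⁻¹ :=
    tsum_geometric_of_lt_one (by norm_num) (by norm_num)
  have : ∑' k : ℕ, (2:ℝ) / 3 ^ (k + 1) = (2/3) * ∑' k : ℕ, ((1/3:ℝ)) ^ k := by
    rw [← tsum_mul_left]
    congr 1; funext k; field_simp; rw [pow_succ, mul_right_comm, ← mul_pow]; norm_num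
  rw [this, h]; norm_num

lemma summable_digit_series {d : ℕ → ℕ} (hd : ∀ k, 1 ≤ k → d k ≤ 2) :
    Summable (fun k : ℕ => (d (k + 1) : ℝ) / 3 ^ (k + 1)) := by
  refine Summable.of_nonneg_of_le (fun k => by positivity) (fun k => ?_) summable_geom3
  have := hd (k+1) (Nat.le_add_left _ _)
  gcongr
  exact_mod_cast this


lemma ternaryDigit_le (t : ℝ) (k : ℕ) : ternaryDigit t k ≤ 2 := by
  unfold ternaryDigit
  split
  · exact le_refl _
  · omega

lemma floor_step {t : ℝ} (ht0 : 0 ≤ t) (ht1 : t < 1) (k : ℕ) :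
    ⌊t * 3 ^ (k+1)⌋ = 3 * ⌊t * 3 ^ k⌋ + (ternaryDigit t (k+1) : ℤ) := by
  have hne : t ≠ 1 := ne_of_lt ht1
  have h0 : (0:ℤ) ≤ ⌊t * 3 ^ (k+1)⌋ := Int.floor_nonneg.2 (by positivity)
  have hr0 : 3 * ⌊t * 3 ^ k⌋ ≤ ⌊t * 3 ^ (k+1)⌋ := by
    have : ((3 * ⌊t * 3 ^ k⌋ : ℤ) : ℝ) ≤ t * 3 ^ (k+1) := by
      push_cast
      have h := Int.floor_le (t * 3 ^ k)
      rw [pow_succ]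
      nlinarith [h]
    exact_mod_cast Int.le_floor.2 this
  have hr3 : ⌊t * 3 ^ (k+1)⌋ < 3 * ⌊t * 3 ^ k⌋ + 3 := by
    have h2 : t * 3 ^ (k+1) < ((3 * ⌊t * 3 ^ k⌋ + 3 : ℤ) : ℝ) := by
      push_cast
      have h := Int.lt_floor_add_one (t * 3 ^ k)
      rw [pow_succ]
      nlinarith [h]
    exact_mod_cast Int.floor_lt.2 h2
  have hd : (ternaryDigit t (k+1) : ℤ) = ⌊t * 3 ^ (k+1)⌋ % 3 := by
    unfold ternaryDigit
    rw [if_neg hne]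
    push_cast [Int.toNat_of_nonneg h0]
    omega
  omega

lemma floor_partial {t : ℝ} (ht0 : 0 ≤ t) (ht1 : t < 1) (m : ℕ) :
    ∑ k ∈ Finset.range m, (ternaryDigit t (k+1) : ℝ) / 3 ^ (k+1)
      = (⌊t * 3 ^ m⌋ : ℝ) / 3 ^ m := by
  induction m with
  | zero => simp [Int.floor_eq_zero_iff.2 ⟨by simpa using ht0, by simpa using ht1⟩]
  | succ m ih =>
      rw [Finset.sum_range_succ, ih, floor_step ht0 ht1 m]
      push_cast
      field_simp
      ring

lemma Phi_ternaryDigit {t : ℝ} (ht0 : 0 ≤ t) (ht1 : t < 1) :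
    Phi (ternaryDigit t) = t := by
  have hs : Summable (fun k : ℕ => (ternaryDigit t (k + 1) : ℝ) / 3 ^ (k + 1)) :=
    summable_digit_series (fun k _ => ternaryDigit_le t k)
  have h1 : Filter.Tendsto
      (fun m => ∑ k ∈ Finset.range m, (ternaryDigit t (k+1) : ℝ) / 3 ^ (k+1))
      Filter.atTop (nhds (Phi (ternaryDigit t))) := hs.hasSum.tendsto_sum_nat
  have h2 : Filter.Tendsto
      (fun m => ∑ k ∈ Finset.range m, (ternaryDigit t (k+1) : ℝ) / 3 ^ (k+1))
      Filter.atTop (nhds t) := by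
    simp only [fun m => floor_partial ht0 ht1 m]
    have hb : Filter.Tendsto (fun m : ℕ => (1:ℝ)/3^m) Filter.atTop (nhds 0) := by
      simpa [div_eq_mul_inv] using
        tendsto_pow_atTop_nhds_zero_of_lt_one (by norm_num : (0:ℝ) ≤ 1/3)
          (by norm_num : (1/3:ℝ) < 1) |>.congr (fun m => by rw [div_pow]; norm_num)
    have hsq : Filter.Tendsto (fun m : ℕ => t - (⌊t * 3 ^ m⌋ : ℝ) / 3 ^ m)
        Filter.atTop (nhds 0) := by
      refine squeeze_zero (fun m => ?_) (fun m => ?_) hb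
      · have h := Int.floor_le (t * 3 ^ m)
        have h3 : (0:ℝ) < 3 ^ m := by positivity
        rw [sub_nonneg, div_le_iff₀ h3]
        linarith
      · have h := Int.lt_floor_add_one (t * 3 ^ m)
        have h3 : (0:ℝ) < 3 ^ m := by positivity
        rw [sub_le_iff_le_add]
        rw [← add_div, le_div_iff₀ h3]
        nlinarith
    have := (tendsto_const_nhds : Filter.Tendsto (fun _ : ℕ => t) Filter.atTop (nhds t)).sub hsq
    simpa using this
  exact tendsto_nhds_unique h1 h2

/-- A "proper" digit sequence: digits ≤ 2 and not eventually all 2. -/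
def Proper (d : ℕ → ℕ) : Prop :=
  (∀ k, 1 ≤ k → d k ≤ 2) ∧ ∀ m, ∃ k, m < k ∧ d k ≤ 1

lemma Phi_nonneg {d : ℕ → ℕ} : 0 ≤ Phi d :=
  tsum_nonneg (fun k => by positivity)

lemma tail_lt_one {d : ℕ → ℕ} (hd : Proper d) (m : ℕ) :
    (∑' k : ℕ, (d (k + m + 1) : ℝ) / 3 ^ (k + 1)) < 1 := by
  obtain ⟨k₀, hk₀m, hk₀⟩ := hd.2 m
  have hsum : Summable (fun k : ℕ => (d (k + m + 1) : ℝ) / 3 ^ (k + 1)) := by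
    refine Summable.of_nonneg_of_le (fun k => by positivity) (fun k => ?_) summable_geom3
    have := hd.1 (k + m + 1) (by omega)
    gcongr
    exact_mod_cast this
  have hlt : ∑' k : ℕ, (d (k + m + 1) : ℝ) / 3 ^ (k + 1) < ∑' k : ℕ, (2:ℝ) / 3 ^ (k + 1) := by
    refine Summable.tsum_lt_tsum (i := k₀ - m - 1) (fun k => ?_) ?_ hsum summable_geom3
    · have := hd.1 (k + m + 1) (by omega)
      show (d (k + m + 1) : ℝ) / 3 ^ (k + 1) ≤ 2 / 3 ^ (k + 1)
      gcongr
      exact_mod_cast this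
    · have he : k₀ - m - 1 + m + 1 = k₀ := by omega
      rw [he]
      have h1 : (d k₀ : ℝ) ≤ 1 := by exact_mod_cast hk₀
      have h3 : (0:ℝ) < 3 ^ (k₀ - m - 1 + 1) := by positivity
      rw [div_lt_div_iff₀ h3 h3]
      nlinarith
  rw [tsum_geom3] at hlt
  exact hlt

lemma Phi_lt_one {d : ℕ → ℕ} (hd : Proper d) : Phi d < 1 := by
  have := tail_lt_one hd 0
  simpa [Phi] using this

lemma Phi_floor {d : ℕ → ℕ} (hd : Proper d) (m : ℕ) :
    ⌊Phi d * 3 ^ m⌋ = (∑ k ∈ Finset.range m, (d (k+1) : ℤ) * 3 ^ (m - 1 - k)) := by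
  have hsum : Summable (fun k : ℕ => (d (k + 1) : ℝ) / 3 ^ (k + 1)) :=
    summable_digit_series hd.1
  have hsplit := Summable.sum_add_tsum_nat_add m hsum
  set R : ℝ := ∑' k : ℕ, (d (k + m + 1) : ℝ) / 3 ^ (k + m + 1) with hR
  have hRval : R = (1/3^m) * ∑' k : ℕ, (d (k + m + 1) : ℝ) / 3 ^ (k + 1) := by
    rw [hR, ← tsum_mul_left]
    congr 1; funext k
    rw [show k + m + 1 = (k+1) + m by omega, pow_add]
    ring
  have hRtail := tail_lt_one hd m
  have hRnn : 0 ≤ ∑' k : ℕ, (d (k + m + 1) : ℝ) / 3 ^ (k + 1) :=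
    tsum_nonneg (fun k => by positivity)
  have hPhi : Phi d = (∑ k ∈ Finset.range m, (d (k+1) : ℝ) / 3 ^ (k+1)) + R := by
    rw [Phi, ← hsplit]
  have h3m : (0:ℝ) < 3 ^ m := by positivity
  have key : Phi d * 3 ^ m
      = ((∑ k ∈ Finset.range m, (d (k+1) : ℤ) * 3 ^ (m - 1 - k) : ℤ) : ℝ)
        + (∑' k : ℕ, (d (k + m + 1) : ℝ) / 3 ^ (k + 1)) := by
    rw [hPhi, hRval]
    push_cast
    rw [add_mul, Finset.sum_mul]
    congr 1
    · refine Finset.sum_congr rfl fun k hk => ?_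
      have hkm : k < m := Finset.mem_range.1 hk
      have : (3:ℝ) ^ m = 3 ^ (k+1) * 3 ^ (m - 1 - k) := by
        rw [← pow_add]
        congr 1
        omega
      rw [this]
      field_simp
    · field_simp
  rw [key]
  rw [Int.floor_eq_iff]
  constructor
  · push_cast; linarith
  · push_cast; linarith

lemma ternaryDigit_Phi {d : ℕ → ℕ} (hd : Proper d) {m : ℕ} (hm : 1 ≤ m) :
    ternaryDigit (Phi d) m = d m := by
  have hne : Phi d ≠ 1 := ne_of_lt (Phi_lt_one hd)
  unfold ternaryDigit
  rw [if_neg hne, Phi_floor hd m]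
  have hN : (∑ k ∈ Finset.range m, (d (k+1) : ℤ) * 3 ^ (m - 1 - k))
      = 3 * (∑ k ∈ Finset.range (m-1), (d (k+1) : ℤ) * 3 ^ (m - 2 - k)) + d m := by
    have hm' : m = (m - 1) + 1 := by omega
    rw [hm', Finset.sum_range_succ]
    simp only [← hm']
    rw [Finset.mul_sum, show m - 1 - (m - 1) = 0 by omega, pow_zero, mul_one]
    congr 1
    refine Finset.sum_congr rfl fun k hk => ?_
    have hk' : k < m - 1 := Finset.mem_range.1 hk
    rw [show m - 1 - k = (m - 2 - k) + 1 by omega, pow_succ]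
    ring
  rw [hN]
  have hnn : (0:ℤ) ≤ ∑ k ∈ Finset.range (m-1), (d (k+1) : ℤ) * 3 ^ (m - 2 - k) :=
    Finset.sum_nonneg fun k _ => by positivity
  have hdm : d m ≤ 2 := hd.1 m hm
  omega




lemma xiPerm_sq : xiPerm * xiPerm = 1 := by
  ext a
  simp [xiPerm]

lemma xiPerm_zpow (m : ℤ) (a : ℝ) :
    (xiPerm ^ m) a = if Even m then a else 2 - a := by
  rcases Int.even_or_odd m with ⟨c, hc⟩ | ⟨c, hc⟩
  · have : xiPerm ^ m = 1 := by
      rw [hc, show c + c = 2 * c by ring, zpow_mul]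
      norm_num [show xiPerm ^ (2:ℤ) = 1 by rw [show (2:ℤ) = (2:ℕ) by norm_num, zpow_natCast, pow_two, xiPerm_sq]]
    rw [this, if_pos ⟨c, hc⟩]
    rfl
  · have h1 : xiPerm ^ m = xiPerm := by
      rw [hc, zpow_add, zpow_mul]
      rw [show xiPerm ^ (2:ℤ) = 1 by rw [show (2:ℤ) = (2:ℕ) by norm_num, zpow_natCast, pow_two, xiPerm_sq]]
      simp
    rw [h1, if_neg (by simp [hc, Int.even_add_one, parity_simps])]
    rfl

lemma xcoord_term_bound {n i : ℕ} {d : ℕ → ℕ} (hd : ∀ k, 1 ≤ k → d k ≤ 2)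
    (hi : 1 ≤ i) (j : ℕ) :
    |((xiPerm ^ (S n i j d)) ((d (i + j * n) : ℝ))) / 3 ^ (j + 1)| ≤ 2 / 3 ^ (j + 1) := by
  have hdj : (d (i + j * n) : ℝ) ≤ 2 := by
    exact_mod_cast hd (i + j * n) (by omega)
  have hdj0 : (0:ℝ) ≤ (d (i + j * n) : ℝ) := Nat.cast_nonneg _
  rw [abs_div, abs_of_pos (by positivity : (0:ℝ) < 3 ^ (j+1))]
  gcongr
  rw [xiPerm_zpow]
  split <;> rw [abs_le] <;> constructor <;> linarith

lemma xcoord_summable {n i : ℕ} {d : ℕ → ℕ} (hd : ∀ k, 1 ≤ k → d k ≤ 2) (hi : 1 ≤ i) :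
    Summable (fun j : ℕ => ((xiPerm ^ (S n i j d)) ((d (i + j * n) : ℝ))) / 3 ^ (j + 1)) := by
  refine Summable.of_abs (Summable.of_nonneg_of_le (fun j => abs_nonneg _)
    (fun j => xcoord_term_bound hd hi j) summable_geom3)

lemma S_congr {n i : ℕ} (hn : 1 ≤ n) (hi : 1 ≤ i) {d d' : ℕ → ℕ} {j₀ : ℕ}
    (h : ∀ k, 1 ≤ k → k ≠ i + j₀ * n → d k = d' k) (j : ℕ) :
    S n i j d = S n i j d' := by
  set m := i + j₀ * n with hm
  unfold S
  have hIcc : ∀ k ∈ Finset.Icc 1 (i + j * n), k ≠ m → (d k : ℤ) = d' k := by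
    intro k hk hkm
    have := Finset.mem_Icc.1 hk
    rw [h k this.1 hkm]
  have hrange : ∀ s ∈ Finset.range (j + 1), s ≠ j₀ → (d (i + s * n) : ℤ) = d' (i + s * n) := by
    intro s _ hs
    have hne : i + s * n ≠ m := by
      rw [hm]
      intro hcon
      have hsn : s * n = j₀ * n := by omega
      exact hs (Nat.eq_of_mul_eq_mul_right (by omega) hsn)
    rw [h (i + s * n) (by omega) hne]
  by_cases hj : j₀ ≤ j
  · have hmem : m ∈ Finset.Icc 1 (i + j * n) := by
      rw [Finset.mem_Icc]
      constructor
      · omega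
      · rw [hm]; have : j₀ * n ≤ j * n := Nat.mul_le_mul_right n hj; omega
    have hmem' : j₀ ∈ Finset.range (j + 1) := Finset.mem_range.2 (by omega)
    rw [← Finset.add_sum_erase _ _ hmem, ← Finset.add_sum_erase _ _ hmem,
        ← Finset.add_sum_erase _ _ hmem', ← Finset.add_sum_erase _ _ hmem']
    have e1 : ∑ k ∈ (Finset.Icc 1 (i + j * n)).erase m, (d k : ℤ)
        = ∑ k ∈ (Finset.Icc 1 (i + j * n)).erase m, (d' k : ℤ) := by
      refine Finset.sum_congr rfl fun k hk => ?_
      exact hIcc k (Finset.mem_of_mem_erase hk) (Finset.ne_of_mem_erase hk)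
    have e2 : ∑ s ∈ (Finset.range (j + 1)).erase j₀, (d (i + s * n) : ℤ)
        = ∑ s ∈ (Finset.range (j + 1)).erase j₀, (d' (i + s * n) : ℤ) := by
      refine Finset.sum_congr rfl fun s hs => ?_
      exact hrange s (Finset.mem_of_mem_erase hs) (Finset.ne_of_mem_erase hs)
    rw [e1, e2]
    ring
  · have e1 : ∑ k ∈ Finset.Icc 1 (i + j * n), (d k : ℤ)
        = ∑ k ∈ Finset.Icc 1 (i + j * n), (d' k : ℤ) := by
      refine Finset.sum_congr rfl fun k hk => ?_
      refine hIcc k hk ?_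
      have := (Finset.mem_Icc.1 hk).2
      rw [hm]
      have hmul : j * n < j₀ * n := Nat.mul_lt_mul_of_lt_of_le (by omega) le_rfl (by omega)
      omega
    have e2 : ∑ s ∈ Finset.range (j + 1), (d (i + s * n) : ℤ)
        = ∑ s ∈ Finset.range (j + 1), (d' (i + s * n) : ℤ) := by
      refine Finset.sum_congr rfl fun s hs => ?_
      refine hrange s hs ?_
      have := Finset.mem_range.1 hs
      omega
    rw [e1, e2]

lemma xcoord_diff {n i : ℕ} (hn : 1 ≤ n) (hi : 1 ≤ i) {d d' : ℕ → ℕ}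
    (hd : ∀ k, 1 ≤ k → d k ≤ 2) (hd' : ∀ k, 1 ≤ k → d' k ≤ 2) (j₀ : ℕ)
    (h : ∀ k, 1 ≤ k → k ≠ i + j₀ * n → d k = d' k) :
    |xcoord n i d - xcoord n i d'|
      = |(d (i + j₀ * n) : ℝ) - (d' (i + j₀ * n) : ℝ)| / 3 ^ (j₀ + 1) := by
  have hS := S_congr hn hi h
  have hsum := xcoord_summable (n := n) hd hi
  have hsum' := xcoord_summable (n := n) hd' hi
  have hdiff : xcoord n i d - xcoord n i d'
      = ∑' j : ℕ, (((xiPerm ^ (S n i j d)) ((d (i + j * n) : ℝ)))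
          - ((xiPerm ^ (S n i j d')) ((d' (i + j * n) : ℝ)))) / 3 ^ (j + 1) := by
    rw [xcoord, xcoord, ← Summable.tsum_sub hsum hsum']
    congr 1; funext j; ring
  have hzero : ∀ j : ℕ, j ≠ j₀ →
      (((xiPerm ^ (S n i j d)) ((d (i + j * n) : ℝ)))
          - ((xiPerm ^ (S n i j d')) ((d' (i + j * n) : ℝ)))) / 3 ^ (j + 1) = 0 := by
    intro j hj
    have hne : i + j * n ≠ i + j₀ * n := by
      intro hcon
      have hsn : j * n = j₀ * n := by omega
      exact hj (Nat.eq_of_mul_eq_mul_right (by omega) hsn)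
    rw [hS j, h (i + j * n) (by omega) hne]
    simp
  rw [hdiff, tsum_eq_single j₀ hzero]
  rw [hS j₀, abs_div, abs_of_pos (by positivity : (0:ℝ) < 3 ^ (j₀+1))]
  congr 1
  rw [xiPerm_zpow, xiPerm_zpow]
  split
  · rfl
  · rw [show (2 - (d (i + j₀ * n) : ℝ)) - (2 - (d' (i + j₀ * n) : ℝ))
        = -((d (i + j₀ * n) : ℝ) - (d' (i + j₀ * n) : ℝ)) by ring, abs_neg]

lemma Phi_diff {d d' : ℕ → ℕ} (hd : ∀ k, 1 ≤ k → d k ≤ 2) (hd' : ∀ k, 1 ≤ k → d' k ≤ 2)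
    {m : ℕ} (hm : 1 ≤ m) (h : ∀ k, 1 ≤ k → k ≠ m → d k = d' k) :
    |Phi d - Phi d'| = |(d m : ℝ) - (d' m : ℝ)| / 3 ^ m := by
  have hsum := summable_digit_series hd
  have hsum' := summable_digit_series hd'
  have hdiff : Phi d - Phi d'
      = ∑' k : ℕ, ((d (k+1) : ℝ) - (d' (k+1) : ℝ)) / 3 ^ (k + 1) := by
    rw [Phi, Phi, ← Summable.tsum_sub hsum hsum']
    congr 1; funext k; ring
  have hzero : ∀ k : ℕ, k ≠ m - 1 → ((d (k+1) : ℝ) - (d' (k+1) : ℝ)) / 3 ^ (k + 1) = 0 := by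
    intro k hk
    rw [h (k+1) (by omega) (by omega)]
    simp
  rw [hdiff, tsum_eq_single (m-1) hzero, show m - 1 + 1 = m by omega,
    abs_div, abs_of_pos (by positivity : (0:ℝ) < 3 ^ m)]

lemma S_even {n i j : ℕ} {d : ℕ → ℕ} (h : ∀ k, Even (d k)) : Even (S n i j d) := by
  unfold S
  have hdvd : ∀ k : ℕ, (2:ℤ) ∣ (d k : ℤ) := fun k =>
    ((Int.even_coe_nat _).2 (h k)).two_dvd
  refine Even.sub ?_ ?_ <;>
  · exact (even_iff_two_dvd).2 (Finset.dvd_sum fun k _ => hdvd _)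

lemma xcoord_of_even {n i : ℕ} {d : ℕ → ℕ} (h : ∀ k, Even (d k)) :
    xcoord n i d = ∑' j : ℕ, (d (i + j * n) : ℝ) / 3 ^ (j + 1) := by
  unfold xcoord
  congr 1; funext j
  rw [xiPerm_zpow, if_pos (S_even h)]

lemma sum_range_geom3 (J : ℕ) :
    ∑ k ∈ Finset.range J, (2:ℝ) / 3 ^ (k+1) = 1 - 1 / 3 ^ J := by
  induction J with
  | zero => simp
  | succ J ih =>
      rw [Finset.sum_range_succ, ih, pow_succ]
      field_simp
      ring

/-- digits of `1 - 3^{-m}` : `2` for `1 ≤ k ≤ m`, `0` beyond. -/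
def eSeq (m : ℕ) (k : ℕ) : ℕ := if k ≤ m then 2 else 0

lemma eSeq_le (m k : ℕ) : eSeq m k ≤ 2 := by unfold eSeq; split <;> omega

lemma eSeq_even (m k : ℕ) : Even (eSeq m k) := by
  unfold eSeq; split
  · exact ⟨1, rfl⟩
  · exact ⟨0, rfl⟩

lemma eSeq_proper (m : ℕ) : Proper (eSeq m) := by
  refine ⟨fun k _ => eSeq_le m k, fun m' => ⟨m + m' + 1, by omega, ?_⟩⟩
  unfold eSeq
  rw [if_neg (by omega)]
  omega

lemma Phi_eSeq (m : ℕ) : Phi (eSeq m) = 1 - 1 / 3 ^ m := by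
  rw [Phi, tsum_eq_sum (s := Finset.range m) (fun k hk => by
    unfold eSeq
    rw [if_neg (by simp at hk; omega)]
    simp)]
  rw [← sum_range_geom3 m]
  refine Finset.sum_congr rfl fun k hk => ?_
  unfold eSeq
  rw [if_pos (by simp at hk; omega)]
  norm_num

lemma xcoord_eSeq {n i : ℕ} (hn : 1 ≤ n) (hi : 1 ≤ i) (j₀ : ℕ) :
    xcoord n i (eSeq (i + j₀ * n)) = 1 - 1 / 3 ^ (j₀ + 1) := by
  rw [xcoord_of_even (eSeq_even _)]
  rw [tsum_eq_sum (s := Finset.range (j₀ + 1)) (fun j hj => by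
    unfold eSeq
    rw [if_neg ?_]
    · simp
    · simp only [Finset.mem_range, not_lt] at hj
      have : j₀ * n < j * n := Nat.mul_lt_mul_of_lt_of_le (by omega) le_rfl (by omega)
      omega)]
  rw [← sum_range_geom3 (j₀ + 1)]
  refine Finset.sum_congr rfl fun j hj => ?_
  simp only [Finset.mem_range] at hj
  unfold eSeq
  rw [if_pos (by have : j * n ≤ j₀ * n := Nat.mul_le_mul_right n (by omega); omega)]
  norm_num

lemma xcoord_allTwo {n i : ℕ} : xcoord n i (fun _ => 2) = 1 := by
  rw [xcoord_of_even (fun _ => ⟨1, rfl⟩)]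
  simpa using tsum_geom3


lemma ternaryDigit_proper {t : ℝ} (ht0 : 0 ≤ t) (ht1 : t < 1) :
    Proper (ternaryDigit t) := by
  refine ⟨fun k _ => ternaryDigit_le t k, ?_⟩
  intro m
  by_contra hcon
  push_neg at hcon
  have htwo : ∀ k, m < k → ternaryDigit t k = 2 := fun k hk => by
    have h1 := hcon k hk
    have h2 := ternaryDigit_le t k
    omega
  set d := ternaryDigit t with hd
  have hsum : Summable (fun k : ℕ => (d (k + 1) : ℝ) / 3 ^ (k + 1)) :=
    summable_digit_series (fun k _ => ternaryDigit_le t k)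
  have hsplit := Summable.sum_add_tsum_nat_add m hsum
  have hPhi : Phi d = t := Phi_ternaryDigit ht0 ht1
  have hT : (∑' k : ℕ, (d (k + m + 1) : ℝ) / 3 ^ (k + m + 1)) = 1 / 3 ^ m := by
    have : ∀ k : ℕ, (d (k + m + 1) : ℝ) / 3 ^ (k + m + 1)
        = (1/3^m) * (2 / 3 ^ (k + 1)) := by
      intro k
      rw [htwo (k + m + 1) (by omega)]
      rw [show k + m + 1 = (k+1) + m by omega, pow_add]
      push_cast
      ring
    simp_rw [this]
    rw [tsum_mul_left, tsum_geom3, mul_one]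
  have hpart := floor_partial ht0 ht1 m
  have heq : t = (⌊t * 3 ^ m⌋ : ℝ) / 3 ^ m + 1 / 3 ^ m := by
    conv_lhs => rw [← hPhi, Phi, ← hsplit]
    rw [hT]
    congr 1
  have hlt := Int.lt_floor_add_one (t * 3 ^ m)
  have h3 : (0:ℝ) < 3 ^ m := by positivity
  rw [← add_div, eq_div_iff (ne_of_gt h3)] at heq
  linarith

lemma key_step (n i : ℕ) (hn : 2 ≤ n) (hi1 : 1 ≤ i) (j₀ : ℕ) (t : ℝ)
    (ht : t ∈ Set.Icc (0:ℝ) 1) :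
    ∃ t' ∈ Set.Icc (0:ℝ) 1, |t - t'| = 1 / 3 ^ (i + j₀ * n) ∧
      |peanoCoord n i t - peanoCoord n i t'| = 1 / 3 ^ (j₀ + 1) := by
  obtain ⟨ht0, ht1⟩ := ht
  have hn1 : 1 ≤ n := by omega
  set m := i + j₀ * n with hm
  have hm1 : 1 ≤ m := by omega
  rcases eq_or_lt_of_le ht1 with heq1 | hlt1
  · -- t = 1
    subst heq1
    refine ⟨Phi (eSeq m), ?_, ?_, ?_⟩
    · rw [Phi_eSeq]
      constructor
      · have h31 : (1:ℝ) ≤ 3 ^ m := one_le_pow₀ (by norm_num)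
        have : (1:ℝ)/3^m ≤ 1 := by
          rw [div_le_one (by positivity)]
          exact h31
        linarith
      · have : (0:ℝ) < 1/3^m := by positivity
        linarith
    · rw [Phi_eSeq]
      rw [show (1:ℝ) - (1 - 1/3^m) = 1/3^m by ring]
      exact abs_of_pos (by positivity)
    · have hone : ternaryDigit (1:ℝ) = fun _ => 2 := by
        funext k
        unfold ternaryDigit
        rw [if_pos rfl]
      have h1 : peanoCoord n i 1 = 1 := by
        rw [peanoCoord, hone, xcoord_allTwo]
      have hprop := eSeq_proper m
      have hdig : ∀ k, 1 ≤ k → ternaryDigit (Phi (eSeq m)) k = eSeq m k :=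
        fun k hk => ternaryDigit_Phi hprop hk
      have h2 : peanoCoord n i (Phi (eSeq m)) = xcoord n i (eSeq m) := by
        rw [peanoCoord]
        have h := xcoord_diff hn1 hi1 (d := ternaryDigit (Phi (eSeq m))) (d' := eSeq m)
          (fun k _ => ternaryDigit_le _ k) (fun k _ => eSeq_le m k) j₀
          (fun k hk _ => hdig k hk)
        rw [← hm, hdig m hm1, sub_self, abs_zero, zero_div, abs_eq_zero, sub_eq_zero] at h
        exact h
      rw [h1, h2, hm, xcoord_eSeq hn1 hi1 j₀]
      rw [show (1:ℝ) - (1 - 1/3^(j₀+1)) = 1/3^(j₀+1) by ring]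
      exact abs_of_pos (by positivity)
  · -- t < 1
    set d := ternaryDigit t with hd
    have hprop : Proper d := ternaryDigit_proper ht0 hlt1
    set e : ℕ := if d m ≤ 1 then d m + 1 else d m - 1 with he
    set d' : ℕ → ℕ := fun k => if k = m then e else d k with hd'
    have hd'le : ∀ k, 1 ≤ k → d' k ≤ 2 := by
      intro k hk
      rw [hd']
      dsimp only
      split
      · rw [he]
        have := hprop.1 m hm1
        split <;> omega
      · exact hprop.1 k hk
    have hd'prop : Proper d' := by
      refine ⟨hd'le, fun m' => ?_⟩
      obtain ⟨k, hk1, hk2⟩ := hprop.2 (max m' m)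
      refine ⟨k, by omega, ?_⟩
      rw [hd']
      dsimp only
      rw [if_neg (by omega)]
      exact hk2
    have hagree : ∀ k, 1 ≤ k → k ≠ m → d k = d' k := by
      intro k _ hkm
      rw [hd']
      dsimp only
      rw [if_neg hkm]
    have hd'm : d' m = e := by rw [hd']; dsimp only; rw [if_pos rfl]
    have habs : |(d m : ℝ) - (d' m : ℝ)| = 1 := by
      rw [hd'm, he]
      have := hprop.1 m hm1
      split
      · push_cast
        rw [show (d m : ℝ) - (d m + 1) = -1 by ring, abs_neg, abs_one]
      · have hdm2 : d m = 2 := by omega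
        rw [hdm2]
        norm_num
    refine ⟨Phi d', ⟨Phi_nonneg, le_of_lt (Phi_lt_one hd'prop)⟩, ?_, ?_⟩
    · have hthis := Phi_diff hprop.1 hd'le hm1 hagree
      have hPd : Phi d = t := by rw [hd]; exact Phi_ternaryDigit ht0 hlt1
      rw [hPd] at hthis
      rw [hthis, habs]
    · have hdig : ∀ k, 1 ≤ k → ternaryDigit (Phi d') k = d' k :=
        fun k hk => ternaryDigit_Phi hd'prop hk
      have := xcoord_diff hn1 hi1 (d := d) (d' := ternaryDigit (Phi d'))
        hprop.1 (fun k _ => ternaryDigit_le _ k) j₀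
        (fun k hk hkm => by rw [hdig k hk, ← hagree k hk (by exact hkm)])
      rw [peanoCoord, peanoCoord, ← hd, this, ← hm, hdig m hm1, habs]

/-- for every `q > 1/n`, `x_i` is nowhere `q`-Hölder continuous on `[0,1]`;
in particular, `x_i` is nowhere differentiable. -/
theorem peanoCoord_nowhere_holder (n i : ℕ) (hn : 2 ≤ n) (hi1 : 1 ≤ i) (hin : i ≤ n) :
    (∀ q : ℝ, 1 / (n : ℝ) < q → ∀ t ∈ Set.Icc (0 : ℝ) 1,
      ¬ ∃ C : ℝ, 0 < C ∧ ∃ δ : ℝ, 0 < δ ∧ ∀ t' ∈ Set.Icc (0 : ℝ) 1, |t - t'| < δ →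
          |peanoCoord n i t - peanoCoord n i t'| ≤ C * |t - t'| ^ q) ∧
    (∀ t ∈ Set.Icc (0 : ℝ) 1,
      ¬ DifferentiableWithinAt ℝ (peanoCoord n i) (Set.Icc (0 : ℝ) 1) t) := by
  have h3pos : (0:ℝ) < 3 := by norm_num
  have main : ∀ q : ℝ, 1 / (n : ℝ) < q → ∀ t ∈ Set.Icc (0 : ℝ) 1,
      ¬ ∃ C : ℝ, 0 < C ∧ ∃ δ : ℝ, 0 < δ ∧ ∀ t' ∈ Set.Icc (0 : ℝ) 1, |t - t'| < δ →
          |peanoCoord n i t - peanoCoord n i t'| ≤ C * |t - t'| ^ q := by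
    rintro q hq t ht ⟨C, hC, δ, hδ, H⟩
    have hnpos : (0:ℝ) < n := by positivity
    have hqn : 1 < q * n := by
      rw [div_lt_iff₀ hnpos] at hq
      linarith
    have hq0 : 0 < q := by nlinarith
    set ε : ℝ := q * n - 1 with hε
    have hεpos : 0 < ε := by rw [hε]; linarith
    have hbase : 1 < (3:ℝ) ^ ε := by
      rw [show (1:ℝ) = (3:ℝ) ^ (0:ℝ) by rw [Real.rpow_zero]]
      exact Real.rpow_lt_rpow_left_iff (by norm_num) |>.2 hεpos
    obtain ⟨j₁, hj₁⟩ := pow_unbounded_of_one_lt (C / (3:ℝ) ^ (q * i - 1)) hbase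
    obtain ⟨j₂, hj₂⟩ := exists_pow_lt_of_lt_one hδ (by norm_num : (1/3:ℝ) < 1)
    set j₀ := max j₁ j₂ with hj₀
    obtain ⟨t', ht', h1, h2⟩ := key_step n i hn hi1 j₀ t ht
    set m := i + j₀ * n with hm
    have hmj₂ : j₂ ≤ m := by
      have : j₂ ≤ j₀ := le_max_right _ _
      have : j₀ ≤ j₀ * n := Nat.le_mul_of_pos_right _ (by omega)
      omega
    have hclose : |t - t'| < δ := by
      rw [h1]
      calc (1:ℝ)/3^m = (1/3)^m := by rw [div_pow]; norm_num
        _ ≤ (1/3)^j₂ := pow_le_pow_of_le_one (by norm_num) (by norm_num) hmj₂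
        _ < δ := hj₂
    have hH := H t' ht' hclose
    rw [h1, h2] at hH
    -- rpow computations
    have hrx : ((1:ℝ)/3^m) ^ q = (3:ℝ) ^ (-(m:ℝ) * q) := by
      rw [show (1:ℝ)/3^m = (3:ℝ) ^ (-(m:ℝ)) by
        rw [Real.rpow_neg h3pos.le, Real.rpow_natCast, one_div]]
      rw [← Real.rpow_mul h3pos.le]
    have hCB : C < (3:ℝ) ^ (q * i - 1 + ε * j₀) := by
      have hb1 : ((3:ℝ) ^ ε) ^ j₁ ≤ ((3:ℝ) ^ ε) ^ j₀ :=
        pow_le_pow_right₀ hbase.le (le_max_left _ _)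
      have hp : (0:ℝ) < (3:ℝ) ^ (q * i - 1) := Real.rpow_pos_of_pos h3pos _
      have : C < (3:ℝ) ^ (q * i - 1) * ((3:ℝ) ^ ε) ^ j₀ := by
        rw [div_lt_iff₀ hp] at hj₁
        calc C < ((3:ℝ) ^ ε) ^ j₁ * (3:ℝ) ^ (q * i - 1) := hj₁
          _ ≤ ((3:ℝ) ^ ε) ^ j₀ * (3:ℝ) ^ (q * i - 1) := by
              exact mul_le_mul_of_nonneg_right hb1 hp.le
          _ = (3:ℝ) ^ (q * i - 1) * ((3:ℝ) ^ ε) ^ j₀ := by ring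
      calc C < (3:ℝ) ^ (q * i - 1) * ((3:ℝ) ^ ε) ^ j₀ := this
        _ = (3:ℝ) ^ (q * i - 1 + ε * j₀) := by
            rw [← Real.rpow_natCast ((3:ℝ) ^ ε) j₀, ← Real.rpow_mul h3pos.le,
              ← Real.rpow_add h3pos]
    have hfinal : C * ((1:ℝ)/3^m) ^ q < 1/3^(j₀+1) := by
      rw [hrx]
      have hp2 : (0:ℝ) < (3:ℝ) ^ (-(m:ℝ) * q) := Real.rpow_pos_of_pos h3pos _
      calc C * (3:ℝ) ^ (-(m:ℝ) * q)
          < (3:ℝ) ^ (q * i - 1 + ε * j₀) * (3:ℝ) ^ (-(m:ℝ) * q) :=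
            mul_lt_mul_of_pos_right hCB hp2
        _ = (3:ℝ) ^ (q * i - 1 + ε * j₀ + -(m:ℝ) * q) := by rw [← Real.rpow_add h3pos]
        _ = (3:ℝ) ^ (-((j₀:ℝ) + 1)) := by
            congr 1
            rw [hε, hm]
            push_cast
            ring
        _ = 1/3^(j₀+1) := by
            rw [Real.rpow_neg h3pos.le, one_div]
            congr 1
            rw [show ((j₀:ℝ) + 1) = ((j₀ + 1 : ℕ) : ℝ) by push_cast; ring,
              Real.rpow_natCast]
    linarith
  refine ⟨main, ?_⟩
  intro t ht hdiff
  have hBO := hdiff.hasFDerivWithinAt.isBigO_sub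
  rw [Asymptotics.isBigO_iff] at hBO
  obtain ⟨c, hc⟩ := hBO
  rw [Filter.Eventually, Metric.mem_nhdsWithin_iff] at hc
  obtain ⟨ε, hε, hsub⟩ := hc
  have hnpos : (0:ℝ) < n := by positivity
  refine main 1 ?_ t ht ⟨|c| + 1, by positivity, ε, hε, ?_⟩
  · rw [div_lt_one hnpos]
    exact_mod_cast (by omega : 1 < n)
  · intro t' ht' hclose
    have ht'mem : t' ∈ Metric.ball t ε ∩ Set.Icc (0:ℝ) 1 := by
      refine ⟨?_, ht'⟩
      rw [Metric.mem_ball, Real.dist_eq, abs_sub_comm]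
      exact hclose
    have hb := hsub ht'mem
    simp only [Set.mem_setOf_eq, Real.norm_eq_abs] at hb
    rw [Real.rpow_one]
    have h1 : |peanoCoord n i t - peanoCoord n i t'|
        = |peanoCoord n i t' - peanoCoord n i t| := abs_sub_comm _ _
    have h2 : |t' - t| = |t - t'| := abs_sub_comm _ _
    rw [h1]
    calc |peanoCoord n i t' - peanoCoord n i t| ≤ c * |t' - t| := hb
      _ ≤ (|c| + 1) * |t - t'| := by
          rw [h2]
          have := abs_nonneg (t - t')
          have := le_abs_self c
          nlinarith [abs_nonneg c]
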